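/- Let R be a ring with a central element c, an element s, and a sequence x : ℤ → R (indexed over nonpositive integers) satisfying s * x 0 = x (-1) + p and s * x (-m) = x (-(m+1)) + c * x (-(m-1)) for all m ≥ 1, where p commutes appropriately. Define S 0 = 1, S 1 = s, S (n+1) = S n * s - c * S (n-1), with c central. Then for all n ≥ 1 and m ≥ 1: S n * x (-m) = x (-(m+n)) + c * S (n-1) * x (-(m-1)), and S n * x 0 = x (-n) + S (n-1) * p. -/
import Mathlib


/-- Theorem 3.6(1)-(2): recursive formulas S n x_{-m} = x_{-(m+n)} + c S_{n-1} x_{-(m-1)}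
and S n x_0 = x_{-n} + S_{n-1} p. -/
theorem Sn_times_negative_cluster_variables
    (R : Type*) [Ring R] (c s p : R)
    (hc : ∀ r : R, c * r = r * c)
    (x : ℤ → R)
    (hx0 : s * x 0 = x (-1) + p)
    (hxm : ∀ m : ℤ, 1 ≤ m → s * x (-m) = x (-(m + 1)) + c * x (-(m - 1)))
    (S : ℕ → R) (hS0 : S 0 = 1) (hS1 : S 1 = s)
    (hrec : ∀ n : ℕ, 1 ≤ n → S (n + 1) = S n * s - c * S (n - 1)) :
    (∀ n m : ℕ, 1 ≤ n → 1 ≤ m →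
      S n * x (-(m : ℤ)) = x (-((m : ℤ) + (n : ℤ))) + c * (S (n - 1) * x (-((m : ℤ) - 1)))) ∧
    (∀ n : ℕ, 1 ≤ n → S n * x 0 = x (-(n : ℤ)) + S (n - 1) * p) := by
  have hcen : ∀ a b : R, a * (c * b) = c * (a * b) := by
    intro a b; rw [← mul_assoc, ← hc, mul_assoc]
  have hA : ∀ n : ℕ, 1 ≤ n → ∀ m : ℤ, 1 ≤ m →
      S n * x (-m) = x (-(m + n)) + c * (S (n - 1) * x (-(m - 1))) := by
    intro n
    induction n with
    | zero => omega
    | succ n ih =>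
      intro _ m hm
      rcases Nat.eq_zero_or_pos n with h0 | h1
      · subst h0
        simp only [hS1, hS0, one_mul, Nat.cast_one]
        exact hxm m hm
      · rw [hrec n h1, sub_mul, mul_assoc, hxm m hm, mul_add,
          ih h1 (m + 1) (by omega), hcen]
        have hm1 : (m + 1 - 1 : ℤ) = m := by ring
        rw [hm1, Nat.add_sub_cancel]
        have h2 : (-(m + 1 + (n : ℤ))) = (-(m + ((n + 1 : ℕ) : ℤ))) := by push_cast; ring
        rw [h2]
        simp only [mul_assoc]
        abel
  refine ⟨fun n m hn hm => hA n hn m (by exact_mod_cast hm), ?_⟩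
  intro n hn
  rcases Nat.exists_eq_add_of_le hn with ⟨k, rfl⟩
  rcases Nat.eq_zero_or_pos k with h0 | h1
  · subst h0
    simpa [hS1, hS0] using hx0
  · rw [add_comm 1 k, hrec k h1, sub_mul, mul_assoc, hx0, mul_add,
      hA k h1 1 le_rfl]
    rw [Nat.add_sub_cancel]
    have h2 : (-(1 + (k : ℤ))) = (-((k + 1 : ℕ) : ℤ)) := by push_cast; ring
    have h3 : ((1 : ℤ) - 1) = -(0 : ℤ) := by ring
    rw [h2, h3, neg_zero]
    simp only [mul_assoc]
    abel
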